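/- Let A be a congruence-distributive algebra. Then A has the FCLP if and only if A is FC-normal. -/

import Mathlib

/-! Universal-algebra framework: algebras over a signature, congruences,
factor congruences, lifting properties. -/

structure Signature where
  ops : Type
  arity : ops → ℕ

structure Alg (σ : Signature) where
  carrier : Type
  interp : ∀ f : σ.ops, (Fin (σ.arity f) → carrier) → carrier

namespace Alg

variable {σ : Signature}

/-- A congruence: an equivalence relation compatible with all operations. -/
def IsCon (A : Alg σ) (r : A.carrier → A.carrier → Prop) : Prop :=
  Equivalence r ∧
    ∀ (f : σ.ops) (x y : Fin (σ.arity f) → A.carrier),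
      (∀ i, r (x i) (y i)) → r (A.interp f x) (A.interp f y)

/-- The least congruence `Δ_A`. -/
def delta (A : Alg σ) : A.carrier → A.carrier → Prop := fun a b => a = b

/-- The greatest congruence `∇_A = A²`. -/
def nabla (A : Alg σ) : A.carrier → A.carrier → Prop := fun _ _ => True

/-- Meet (intersection) of congruences. -/
def conMeet (A : Alg σ) (r s : A.carrier → A.carrier → Prop) :
    A.carrier → A.carrier → Prop := fun a b => r a b ∧ s a b

/-- Join of congruences: the least congruence containing both. -/
def conJoin (A : Alg σ) (r s : A.carrier → A.carrier → Prop) :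
    A.carrier → A.carrier → Prop := fun a b =>
  ∀ t, A.IsCon t → (∀ x y, r x y → t x y) → (∀ x y, s x y → t x y) → t a b

/-- The congruence generated by a set of pairs. -/
def conGen (A : Alg σ) (X : Set (A.carrier × A.carrier)) :
    A.carrier → A.carrier → Prop := fun a b =>
  ∀ t, A.IsCon t → (∀ p ∈ X, t p.1 p.2) → t a b

/-- Composition of relations: `(a,b) ∈ comp r s` iff `(a,x) ∈ s` and `(x,b) ∈ r`
for some `x`. -/
def comp (A : Alg σ) (r s : A.carrier → A.carrier → Prop) :
    A.carrier → A.carrier → Prop := fun a b => ∃ x, s a x ∧ r x b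

/-- Factor congruences: congruences `φ` having a congruence `φ*` with
`φ ∨ φ* = ∇`, `φ ∩ φ* = Δ` and `φ ∘ φ* = φ* ∘ φ`. -/
def IsFC (A : Alg σ) (φ : A.carrier → A.carrier → Prop) : Prop :=
  A.IsCon φ ∧ ∃ ψ, A.IsCon ψ ∧ A.conJoin φ ψ = A.nabla ∧
    A.conMeet φ ψ = A.delta ∧ A.comp φ ψ = A.comp ψ φ

/-- Boolean congruences: complemented elements of the lattice `Con(A)`. -/
def IsBooleanCon (A : Alg σ) (φ : A.carrier → A.carrier → Prop) : Prop :=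
  A.IsCon φ ∧ ∃ ψ, A.IsCon ψ ∧ A.conJoin φ ψ = A.nabla ∧ A.conMeet φ ψ = A.delta

/-- `A` is congruence-distributive iff the lattice `Con(A)` is distributive. -/
def CongDistrib (A : Alg σ) : Prop :=
  ∀ r s t, A.IsCon r → A.IsCon s → A.IsCon t →
    A.conMeet r (A.conJoin s t) = A.conJoin (A.conMeet r s) (A.conMeet r t)

/-- `A` is congruence-permutable iff all congruences permute under composition. -/
def CongPermutable (A : Alg σ) : Prop :=
  ∀ r s, A.IsCon r → A.IsCon s → A.comp r s = A.comp s r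

/-- Arithmetical = congruence-distributive + congruence-permutable. -/
def Arithmetical (A : Alg σ) : Prop := A.CongDistrib ∧ A.CongPermutable

/-- The quotient algebra `A/θ`. -/
noncomputable def quotAlg (A : Alg σ) (θ : A.carrier → A.carrier → Prop) :
    Alg σ where
  carrier := Quot θ
  interp f x := Quot.mk θ (A.interp f fun i => (x i).out)

/-- The image `α/θ = {(a/θ, b/θ) : (a,b) ∈ α}` of a relation in the quotient. -/
def quotRel (A : Alg σ) (θ α : A.carrier → A.carrier → Prop) :
    Quot θ → Quot θ → Prop := fun x y =>
  ∃ a b, x = Quot.mk θ a ∧ y = Quot.mk θ b ∧ α a b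

/-- `θ` has the Factor Congruence Lifting Property: the Boolean morphism
`FC(θ) : FC(A) → FC(A/θ)`, `ψ ↦ (ψ ∨ θ)/θ`, is surjective. -/
def HasFCLP (A : Alg σ) (θ : A.carrier → A.carrier → Prop) : Prop :=
  ∀ γ, (A.quotAlg θ).IsFC γ →
    ∃ ψ, A.IsFC ψ ∧ A.quotRel θ (A.conJoin ψ θ) = γ

/-- `θ` has the Congruence Boolean Lifting Property: the Boolean morphism
`B(Con(A)) → B(Con(A/θ))`, `ψ ↦ (ψ ∨ θ)/θ`, is surjective. -/
def HasCBLP (A : Alg σ) (θ : A.carrier → A.carrier → Prop) : Prop :=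
  ∀ γ, (A.quotAlg θ).IsBooleanCon γ →
    ∃ ψ, A.IsBooleanCon ψ ∧ A.quotRel θ (A.conJoin ψ θ) = γ

/-- `A` has FCLP iff every congruence of `A` has FCLP. -/
def AlgFCLP (A : Alg σ) : Prop := ∀ θ, A.IsCon θ → A.HasFCLP θ

/-- `A` has CBLP iff every congruence of `A` has CBLP. -/
def AlgCBLP (A : Alg σ) : Prop := ∀ θ, A.IsCon θ → A.HasCBLP θ

/-- FC-normality. -/
def FCNormal (A : Alg σ) : Prop :=
  ∀ φ ψ, A.IsCon φ → A.IsCon ψ → A.comp φ ψ = A.nabla →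
    ∃ α β, A.IsFC α ∧ A.IsFC β ∧ A.conMeet α β = A.delta ∧
      A.comp φ α = A.nabla ∧ A.comp ψ β = A.nabla

/-- B-normality. -/
def BNormal (A : Alg σ) : Prop :=
  ∀ φ ψ, A.IsCon φ → A.IsCon ψ → A.conJoin φ ψ = A.nabla →
    ∃ α β, A.IsBooleanCon α ∧ A.IsBooleanCon β ∧ A.conMeet α β = A.delta ∧
      A.conJoin φ α = A.nabla ∧ A.conJoin ψ β = A.nabla

/-- Isomorphism of algebras. -/
def Iso (A B : Alg σ) : Prop :=
  ∃ e : A.carrier ≃ B.carrier,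
    ∀ (f : σ.ops) (x : Fin (σ.arity f) → A.carrier),
      e (A.interp f x) = B.interp f fun i => e (x i)

/-- Direct product of a finite family of algebras. -/
def prodAlg {n : ℕ} (B : Fin n → Alg σ) : Alg σ where
  carrier := ∀ i, (B i).carrier
  interp f x := fun i => (B i).interp f fun j => x j i

/-- The product congruence `θ₁ × … × θₙ`. -/
def prodRel {n : ℕ} (B : Fin n → Alg σ)
    (θ : ∀ i, (B i).carrier → (B i).carrier → Prop) :
    (prodAlg B).carrier → (prodAlg B).carrier → Prop :=
  fun x y => ∀ i, θ i (x i) (y i)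

/-- Maximal congruences: maximal elements of `(Con(A) \ {∇}, ⊆)`. -/
def IsMaxCon (A : Alg σ) (θ : A.carrier → A.carrier → Prop) : Prop :=
  A.IsCon θ ∧ θ ≠ A.nabla ∧
    ∀ ψ, A.IsCon ψ → ψ ≠ A.nabla → (∀ a b, θ a b → ψ a b) → ψ = θ

/-- Prime congruences. -/
def IsPrimeCon (A : Alg σ) (θ : A.carrier → A.carrier → Prop) : Prop :=
  A.IsCon θ ∧ ∀ α β, A.IsCon α → A.IsCon β →
    (∀ a b, α a b → β a b → θ a b) →
    (∀ a b, α a b → θ a b) ∨ ∀ a b, β a b → θ a b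

end Alg


/-! ### Auxiliary development for the proof -/

namespace Alg

variable {σ : Signature} {A : Alg σ}

theorem relExt {r s : A.carrier → A.carrier → Prop}
    (h : ∀ a b, r a b ↔ s a b) : r = s :=
  funext fun a => funext fun b => propext (h a b)

/-- Pointwise application of an equality of relations. -/
theorem relApp {r s : A.carrier → A.carrier → Prop} (h : r = s) {a b : A.carrier}
    (hr : r a b) : s a b := h ▸ hr

def Le (A : Alg σ) (r s : A.carrier → A.carrier → Prop) : Prop :=
  ∀ a b, r a b → s a b

theorem meet_comm (r s : A.carrier → A.carrier → Prop) :
    A.conMeet r s = A.conMeet s r :=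
  relExt fun _ _ => And.comm

theorem join_comm (r s : A.carrier → A.carrier → Prop) :
    A.conJoin r s = A.conJoin s r :=
  relExt fun _ _ => ⟨fun h t ht h1 h2 => h t ht h2 h1, fun h t ht h1 h2 => h t ht h2 h1⟩

theorem meet_isCon {r s : A.carrier → A.carrier → Prop}
    (hr : A.IsCon r) (hs : A.IsCon s) : A.IsCon (A.conMeet r s) := by
  refine ⟨⟨fun a => ⟨hr.1.refl a, hs.1.refl a⟩,
    fun h => ⟨hr.1.symm h.1, hs.1.symm h.2⟩,
    fun h h' => ⟨hr.1.trans h.1 h'.1, hs.1.trans h.2 h'.2⟩⟩, ?_⟩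
  intro f x y h
  exact ⟨hr.2 f x y fun i => (h i).1, hs.2 f x y fun i => (h i).2⟩

theorem join_isCon (r s : A.carrier → A.carrier → Prop) :
    A.IsCon (A.conJoin r s) := by
  refine ⟨⟨fun a t ht _ _ => ht.1.refl a,
    fun h t ht h1 h2 => ht.1.symm (h t ht h1 h2),
    fun h h' t ht h1 h2 => ht.1.trans (h t ht h1 h2) (h' t ht h1 h2)⟩, ?_⟩
  intro f x y h t ht h1 h2
  exact ht.2 f x y fun i => h i t ht h1 h2

theorem le_join_left (r s : A.carrier → A.carrier → Prop) :
    A.Le r (A.conJoin r s) :=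
  fun _ _ h _ _ h1 _ => h1 _ _ h

theorem le_join_right (r s : A.carrier → A.carrier → Prop) :
    A.Le s (A.conJoin r s) :=
  fun _ _ h _ _ _ h2 => h2 _ _ h

theorem join_le {r s t : A.carrier → A.carrier → Prop}
    (ht : A.IsCon t) (h1 : A.Le r t) (h2 : A.Le s t) : A.Le (A.conJoin r s) t :=
  fun _ _ h => h t ht h1 h2

theorem join_mono {r r' s s' : A.carrier → A.carrier → Prop}
    (h1 : A.Le r r') (h2 : A.Le s s') : A.Le (A.conJoin r s) (A.conJoin r' s') :=
  fun _ _ h t ht hr hs =>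
    h t ht (fun x y hxy => hr x y (h1 x y hxy)) (fun x y hxy => hs x y (h2 x y hxy))

theorem comp_le_join (r s : A.carrier → A.carrier → Prop) :
    A.Le (A.comp r s) (A.conJoin r s) := by
  rintro a b ⟨x, hs, hr⟩
  exact (join_isCon r s).1.trans (le_join_right r s a x hs) (le_join_left r s x b hr)

theorem comp_mono_left {r r' s : A.carrier → A.carrier → Prop}
    (h : A.Le r r') : A.Le (A.comp r s) (A.comp r' s) := by
  rintro a b ⟨x, hs, hr⟩
  exact ⟨x, hs, h x b hr⟩

theorem nabla_of_rel {r : A.carrier → A.carrier → Prop}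
    (h : ∀ a b, r a b) : r = A.nabla :=
  relExt fun a b => ⟨fun _ => trivial, fun _ => h a b⟩

theorem nabla_of_comp {r s : A.carrier → A.carrier → Prop}
    (h : A.comp r s = A.nabla) : A.conJoin r s = A.nabla :=
  nabla_of_rel fun a b => comp_le_join r s a b (by rw [h]; trivial)

theorem comp_nabla_symm {r s : A.carrier → A.carrier → Prop}
    (hr : A.IsCon r) (hs : A.IsCon s) (h : A.comp r s = A.nabla) :
    A.comp s r = A.nabla := by
  apply nabla_of_rel
  intro a b
  have : A.comp r s b a := by rw [h]; trivial
  obtain ⟨x, h1, h2⟩ := this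
  exact ⟨x, hr.1.symm h2, hs.1.symm h1⟩

/-- If two congruences permute and their join is `∇`, their composition is `∇`. -/
theorem comp_eq_nabla {r s : A.carrier → A.carrier → Prop}
    (hr : A.IsCon r) (hs : A.IsCon s) (hperm : A.comp r s = A.comp s r)
    (hjoin : A.conJoin r s = A.nabla) : A.comp r s = A.nabla := by
  have hcon : A.IsCon (A.comp r s) := by
    constructor
    · constructor
      · exact fun a => ⟨a, hs.1.refl a, hr.1.refl a⟩
      · rintro a b ⟨x, h1, h2⟩
        have : A.comp s r b a := ⟨x, hr.1.symm h2, hs.1.symm h1⟩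
        rw [hperm]; exact this
      · rintro a b c ⟨x, h1, h2⟩ ⟨y, h3, h4⟩
        have hxy : A.comp s r x y := ⟨b, h2, h3⟩
        rw [← hperm] at hxy
        obtain ⟨z, h5, h6⟩ := hxy
        exact ⟨z, hs.1.trans h1 h5, hr.1.trans h6 h4⟩
    · intro f x y h
      choose z h1 h2 using h
      exact ⟨A.interp f z, hs.2 f x z h1, hr.2 f z y h2⟩
  apply nabla_of_rel
  intro a b
  have hj : A.conJoin r s a b := by rw [hjoin]; trivial
  exact hj (A.comp r s) hcon
    (fun x y hxy => ⟨x, hs.1.refl x, hxy⟩)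
    (fun x y hxy => ⟨y, hxy, hr.1.refl y⟩)

/-! ### Quotient lemmas -/

theorem mk_eq_mk {θ : A.carrier → A.carrier → Prop} (hθ : A.IsCon θ)
    {a b : A.carrier} : Quot.mk θ a = Quot.mk θ b ↔ θ a b :=
  ⟨fun he => (Equivalence.eqvGen_iff hθ.1).mp (Quot.eq.mp he), Quot.sound⟩

/-- Pullback of a relation on the quotient. -/
def pull (A : Alg σ) (θ : A.carrier → A.carrier → Prop)
    (γ : Quot θ → Quot θ → Prop) : A.carrier → A.carrier → Prop :=
  fun a b => γ (Quot.mk θ a) (Quot.mk θ b)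

theorem mk_interp {θ : A.carrier → A.carrier → Prop} (hθ : A.IsCon θ)
    (f : σ.ops) (x : Fin (σ.arity f) → A.carrier) :
    Quot.mk θ (A.interp f x) = (A.quotAlg θ).interp f (fun i => Quot.mk θ (x i)) := by
  show Quot.mk θ (A.interp f x)
    = Quot.mk θ (A.interp f fun i => (Quot.mk θ (x i)).out)
  apply (mk_eq_mk hθ).mpr
  apply hθ.2
  intro i
  apply (mk_eq_mk hθ).mp
  rw [Quot.out_eq]

theorem pull_isCon {θ : A.carrier → A.carrier → Prop} (hθ : A.IsCon θ)
    {γ : Quot θ → Quot θ → Prop} (hγ : (A.quotAlg θ).IsCon γ) :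
    A.IsCon (A.pull θ γ) := by
  refine ⟨⟨fun a => hγ.1.refl _, fun h => hγ.1.symm h, fun h h' => hγ.1.trans h h'⟩, ?_⟩
  intro f x y h
  show γ (Quot.mk θ (A.interp f x)) (Quot.mk θ (A.interp f y))
  rw [mk_interp hθ, mk_interp hθ]
  exact hγ.2 f _ _ h

theorem le_pull {θ : A.carrier → A.carrier → Prop} (hθ : A.IsCon θ)
    {γ : Quot θ → Quot θ → Prop} (hγ : (A.quotAlg θ).IsCon γ) :
    A.Le θ (A.pull θ γ) := by
  intro a b h
  show γ (Quot.mk θ a) (Quot.mk θ b)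
  rw [(mk_eq_mk hθ).mpr h]
  exact hγ.1.refl _

theorem quotRel_pull {θ : A.carrier → A.carrier → Prop}
    (γ : Quot θ → Quot θ → Prop) : A.quotRel θ (A.pull θ γ) = γ := by
  funext x y
  apply propext
  constructor
  · rintro ⟨a, b, rfl, rfl, h⟩
    exact h
  · intro h
    induction x using Quot.ind with | _ a =>
    induction y using Quot.ind with | _ b =>
    exact ⟨a, b, rfl, rfl, h⟩

theorem pull_quotRel {θ α : A.carrier → A.carrier → Prop} (hθ : A.IsCon θ)
    (hα : A.IsCon α) (hle : A.Le θ α) : A.pull θ (A.quotRel θ α) = α := by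
  apply relExt
  intro a b
  constructor
  · rintro ⟨a', b', ha, hb, h⟩
    have h1 : α a a' := hle _ _ ((mk_eq_mk hθ).mp ha)
    have h2 : α b' b := hle _ _ ((mk_eq_mk hθ).mp hb.symm)
    exact hα.1.trans (hα.1.trans h1 h) h2
  · intro h
    exact ⟨a, b, rfl, rfl, h⟩

theorem quotRel_isCon {θ α : A.carrier → A.carrier → Prop} (hθ : A.IsCon θ)
    (hα : A.IsCon α) (hle : A.Le θ α) :
    (A.quotAlg θ).IsCon (A.quotRel θ α) := by
  have key : ∀ x y, A.quotRel θ α x y → α x.out y.out := by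
    rintro x y ⟨a, b, rfl, rfl, h⟩
    have h1 : α (Quot.mk θ a).out a := hle _ _ ((mk_eq_mk hθ).mp (Quot.out_eq _))
    have h2 : α b (Quot.mk θ b).out := hle _ _ ((mk_eq_mk hθ).mp (Quot.out_eq _).symm)
    exact hα.1.trans (hα.1.trans h1 h) h2
  constructor
  · constructor
    · intro x
      induction x using Quot.ind with | _ a =>
      exact ⟨a, a, rfl, rfl, hα.1.refl a⟩
    · rintro x y ⟨a, b, ha, hb, h⟩
      exact ⟨b, a, hb, ha, hα.1.symm h⟩
    · intro x y z h1 h2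
      obtain ⟨a, b, rfl, rfl, hab⟩ := h1
      obtain ⟨b', c, hb', rfl, hbc⟩ := h2
      have : α b b' := hle _ _ ((mk_eq_mk hθ).mp hb')
      exact ⟨a, c, rfl, rfl, hα.1.trans (hα.1.trans hab this) hbc⟩
  · intro f x y h
    refine ⟨A.interp f (fun i => (x i).out), A.interp f (fun i => (y i).out),
      rfl, rfl, ?_⟩
    exact hα.2 f _ _ fun i => key _ _ (h i)

end Alg

/-- A congruence-distributive algebra has FCLP iff it is FC-normal. -/
theorem stmt_8 {σ : Signature} (A : Alg σ) (hne : Nonempty A.carrier)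
    (hcd : A.CongDistrib) : A.AlgFCLP ↔ A.FCNormal := by
  constructor
  · -- FCLP → FC-normal
    intro hl φ ψ hφc hψc hcompφψ
    set θ := A.conMeet φ ψ with hθdef
    have hθc : A.IsCon θ := Alg.meet_isCon hφc hψc
    have hθφ : A.Le θ φ := fun a b h => h.1
    have hθψ : A.Le θ ψ := fun a b h => h.2
    set Γ := A.quotRel θ φ with hΓdef
    set Ψ := A.quotRel θ ψ with hΨdef
    have hΓc := Alg.quotRel_isCon hθc hφc hθφ
    have hΨc := Alg.quotRel_isCon hθc hψc hθψ
    have hcompψφ := Alg.comp_nabla_symm hφc hψc hcompφψ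
    have hjq : (A.quotAlg θ).conJoin Γ Ψ = (A.quotAlg θ).nabla := by
      apply Alg.nabla_of_rel
      intro x y
      induction x using Quot.ind with | _ a =>
      induction y using Quot.ind with | _ b =>
      have h : A.comp φ ψ a b := by rw [hcompφψ]; trivial
      obtain ⟨c, h1, h2⟩ := h
      have hΨac : Ψ (Quot.mk θ a) (Quot.mk θ c) := ⟨a, c, rfl, rfl, h1⟩
      have hΓcb : Γ (Quot.mk θ c) (Quot.mk θ b) := ⟨c, b, rfl, rfl, h2⟩
      exact (Alg.join_isCon (A := A.quotAlg θ) Γ Ψ).1.trans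
        (Alg.le_join_right (A := A.quotAlg θ) Γ Ψ _ _ hΨac)
        (Alg.le_join_left (A := A.quotAlg θ) Γ Ψ _ _ hΓcb)
    have hmq : (A.quotAlg θ).conMeet Γ Ψ = (A.quotAlg θ).delta := by
      apply Alg.relExt
      intro x y
      constructor
      · rintro ⟨⟨a, b, rfl, rfl, hab⟩, ⟨a', b', ha', hb', hab'⟩⟩
        have h1 : θ a a' := (Alg.mk_eq_mk hθc).mp ha'
        have h2 : θ b' b := (Alg.mk_eq_mk hθc).mp hb'.symm
        have hψab : ψ a b := hψc.1.trans (hψc.1.trans (hθψ _ _ h1) hab') (hθψ _ _ h2)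
        exact (Alg.mk_eq_mk hθc).mpr ⟨hab, hψab⟩
      · intro h
        have hxy : x = y := h
        subst hxy
        exact ⟨hΓc.1.refl x, hΨc.1.refl x⟩
    have hcq1 : (A.quotAlg θ).comp Γ Ψ = (A.quotAlg θ).nabla := by
      apply Alg.nabla_of_rel
      intro x y
      have h : A.comp φ ψ x.out y.out := by rw [hcompφψ]; trivial
      obtain ⟨c, h1, h2⟩ := h
      exact ⟨Quot.mk θ c, ⟨x.out, c, (Quot.out_eq x).symm, rfl, h1⟩,
        ⟨c, y.out, rfl, (Quot.out_eq y).symm, h2⟩⟩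
    have hcq2 : (A.quotAlg θ).comp Ψ Γ = (A.quotAlg θ).nabla := by
      apply Alg.nabla_of_rel
      intro x y
      have h : A.comp ψ φ x.out y.out := by rw [hcompψφ]; trivial
      obtain ⟨c, h1, h2⟩ := h
      exact ⟨Quot.mk θ c, ⟨x.out, c, (Quot.out_eq x).symm, rfl, h1⟩,
        ⟨c, y.out, rfl, (Quot.out_eq y).symm, h2⟩⟩
    obtain ⟨β, hβFC, hlift⟩ := hl θ hθc Γ ⟨hΓc, Ψ, hΨc, hjq, hmq, hcq1.trans hcq2.symm⟩
    have hβθφ : A.conJoin β θ = φ := by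
      have h := congrArg (A.pull θ) hlift
      rwa [Alg.pull_quotRel hθc (Alg.join_isCon β θ) (Alg.le_join_right β θ),
        hΓdef, Alg.pull_quotRel hθc hφc hθφ] at h
    obtain ⟨hβc, α, hαc, hjβα, hmβα, hpβα⟩ := hβFC
    have hcβα : A.comp β α = A.nabla := Alg.comp_eq_nabla hβc hαc hpβα hjβα
    have hβφ : A.Le β φ := fun a b h => Alg.relApp hβθφ (Alg.le_join_left β θ a b h)
    have hjφα : A.conJoin φ α = A.nabla := by
      apply Alg.nabla_of_rel
      intro a b
      have h : A.comp β α a b := by rw [hcβα]; trivial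
      exact Alg.join_mono hβφ (fun _ _ h => h) a b (Alg.comp_le_join β α a b h)
    have hmφα_le : A.Le (A.conMeet φ α) θ := by
      intro a b h
      have h1 : A.conMeet α (A.conJoin β θ) a b := ⟨h.2, Alg.relApp hβθφ.symm h.1⟩
      have h2 := Alg.relApp (hcd α β θ hαc hβc hθc) h1
      refine Alg.join_le hθc ?_ (fun x y hxy => hxy.2) a b h2
      intro x y hxy
      have hd : A.delta x y := Alg.relApp hmβα ⟨hxy.2, hxy.1⟩
      exact hd ▸ hθc.1.refl x
    have hψᾱ : A.Le ψ (A.conJoin α θ) := by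
      intro a b h
      have h0 : A.conJoin φ (A.conJoin α θ) a b :=
        Alg.join_mono (fun _ _ h => h) (Alg.le_join_left α θ) a b (by rw [hjφα]; trivial)
      have h2 := Alg.relApp (hcd ψ φ (A.conJoin α θ) hψc hφc (Alg.join_isCon α θ)) ⟨h, h0⟩
      refine Alg.join_le (Alg.join_isCon α θ) ?_ (fun x y hxy => hxy.2) a b h2
      intro x y hxy
      exact Alg.le_join_right α θ x y ⟨hxy.2, hxy.1⟩
    have hᾱψ : A.Le (A.conJoin α θ) ψ := by
      intro a b h
      have h0 : A.conJoin φ ψ a b := by rw [Alg.nabla_of_comp hcompφψ]; trivial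
      have h2 := Alg.relApp (hcd (A.conJoin α θ) φ ψ (Alg.join_isCon α θ) hφc hψc) ⟨h, h0⟩
      refine Alg.join_le hψc ?_ (fun x y hxy => hxy.2) a b h2
      intro x y hxy
      have h3 := Alg.relApp (hcd φ α θ hφc hαc hθc) ⟨hxy.2, hxy.1⟩
      exact hθψ x y (Alg.join_le hθc hmφα_le (fun u v huv => huv.2) x y h3)
    have hψeq : A.conJoin α θ = ψ := Alg.relExt fun a b => ⟨hᾱψ a b, hψᾱ a b⟩
    have hαψ : A.Le α ψ := fun a b h => Alg.relApp hψeq (Alg.le_join_left α θ a b h)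
    refine ⟨α, β, ⟨hαc, β, hβc, ?_, ?_, hpβα.symm⟩, ⟨hβc, α, hαc, hjβα, hmβα, hpβα⟩,
      ?_, ?_, ?_⟩
    · rw [Alg.join_comm]; exact hjβα
    · rw [Alg.meet_comm]; exact hmβα
    · rw [Alg.meet_comm]; exact hmβα
    · apply Alg.nabla_of_rel
      intro a b
      exact Alg.comp_mono_left hβφ a b (by rw [hcβα]; trivial)
    · apply Alg.nabla_of_rel
      intro a b
      have h : A.comp α β a b := by rw [← hpβα, hcβα]; trivial
      exact Alg.comp_mono_left hαψ a b h
  · -- FC-normal → FCLP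
    intro hfc θ hθc γ hγFC
    obtain ⟨hγc, γ', hγ'c, hj, hm, hp⟩ := hγFC
    have hφc := Alg.pull_isCon hθc hγc
    have hψc := Alg.pull_isCon hθc hγ'c
    have hθφ := Alg.le_pull hθc hγc
    have hθψ := Alg.le_pull hθc hγ'c
    have hcq : (A.quotAlg θ).comp γ γ' = (A.quotAlg θ).nabla :=
      Alg.comp_eq_nabla hγc hγ'c hp hj
    have hcomp : A.comp (A.pull θ γ) (A.pull θ γ') = A.nabla := by
      apply Alg.nabla_of_rel
      intro a b
      have h : (A.quotAlg θ).comp γ γ' (Quot.mk θ a) (Quot.mk θ b) := by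
        rw [hcq]; trivial
      obtain ⟨ξ, h1, h2⟩ := h
      refine ⟨ξ.out, ?_, ?_⟩
      · show γ' (Quot.mk θ a) (Quot.mk θ ξ.out)
        exact (congrArg (γ' (Quot.mk θ a)) (Quot.out_eq ξ)).mpr h1
      · show γ (Quot.mk θ ξ.out) (Quot.mk θ b)
        exact (congrArg (fun z => γ z (Quot.mk θ b)) (Quot.out_eq ξ)).mpr h2
    obtain ⟨α, β, hαFC, hβFC, hmeet, hc1, hc2⟩ :=
      hfc (A.pull θ γ) (A.pull θ γ') hφc hψc hcomp
    have hαc := hαFC.1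
    have hβc := hβFC.1
    have hmφψ : A.Le (A.conMeet (A.pull θ γ) (A.pull θ γ')) θ := by
      intro a b h
      have h1 : (A.quotAlg θ).conMeet γ γ' (Quot.mk θ a) (Quot.mk θ b) := ⟨h.1, h.2⟩
      have h2 : (A.quotAlg θ).delta (Quot.mk θ a) (Quot.mk θ b) := Alg.relApp hm h1
      exact (Alg.mk_eq_mk hθc).mp h2
    have hψᾱ : A.Le (A.pull θ γ') (A.conJoin α θ) := by
      intro a b h
      have h0 : A.conJoin (A.pull θ γ) (A.conJoin α θ) a b := by
        have h1 : A.comp (A.pull θ γ) α a b := by rw [hc1]; trivial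
        exact Alg.join_mono (fun _ _ h => h) (Alg.le_join_left α θ) a b
          (Alg.comp_le_join _ α a b h1)
      have h2 := Alg.relApp (hcd (A.pull θ γ') (A.pull θ γ) (A.conJoin α θ)
        hψc hφc (Alg.join_isCon α θ)) ⟨h, h0⟩
      refine Alg.join_le (Alg.join_isCon α θ) ?_ (fun x y hxy => hxy.2) a b h2
      exact fun x y hxy => Alg.le_join_right α θ x y (hmφψ x y ⟨hxy.2, hxy.1⟩)
    have hmab : A.Le (A.conMeet (A.conJoin α θ) (A.conJoin β θ)) θ := by
      intro a b h
      have h2 := Alg.relApp (hcd (A.conJoin α θ) β θ (Alg.join_isCon α θ) hβc hθc) h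
      refine Alg.join_le hθc ?_ (fun x y hxy => hxy.2) a b h2
      intro x y hxy
      have h3 := Alg.relApp (hcd β α θ hβc hαc hθc) ⟨hxy.2, hxy.1⟩
      refine Alg.join_le hθc ?_ (fun u v huv => huv.2) x y h3
      intro u v huv
      have hd : A.delta u v := Alg.relApp hmeet ⟨huv.2, huv.1⟩
      exact hd ▸ hθc.1.refl u
    have hbφ : A.Le (A.conJoin β θ) (A.pull θ γ) := by
      intro a b h
      have h0 : A.conJoin (A.pull θ γ) (A.pull θ γ') a b := by
        rw [Alg.nabla_of_comp hcomp]; trivial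
      have h2 := Alg.relApp (hcd (A.conJoin β θ) (A.pull θ γ) (A.pull θ γ')
        (Alg.join_isCon β θ) hφc hψc) ⟨h, h0⟩
      refine Alg.join_le hφc (fun x y hxy => hxy.2) ?_ a b h2
      intro x y hxy
      exact hθφ x y (hmab x y ⟨hψᾱ x y hxy.2, hxy.1⟩)
    have hφb : A.Le (A.pull θ γ) (A.conJoin β θ) := by
      intro a b h
      have h0 : A.conJoin (A.pull θ γ') (A.conJoin β θ) a b := by
        have h1 : A.comp (A.pull θ γ') β a b := by rw [hc2]; trivial
        exact Alg.join_mono (fun _ _ h => h) (Alg.le_join_left β θ) a b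
          (Alg.comp_le_join _ β a b h1)
      have h2 := Alg.relApp (hcd (A.pull θ γ) (A.pull θ γ') (A.conJoin β θ)
        hφc hψc (Alg.join_isCon β θ)) ⟨h, h0⟩
      refine Alg.join_le (Alg.join_isCon β θ) ?_ (fun x y hxy => hxy.2) a b h2
      exact fun x y hxy => Alg.le_join_right β θ x y (hmφψ x y hxy)
    have hbeq : A.conJoin β θ = A.pull θ γ :=
      Alg.relExt fun a b => ⟨hbφ a b, hφb a b⟩
    exact ⟨β, hβFC, by rw [hbeq]; exact Alg.quotRel_pull γ⟩
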